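/- Contractual exculpation: for every bilateral contract γ = A says c | B says d with c 0-free, there exist a bilateral contract γ' and an A-solo trace η of length at most 2 such that γ —η→ γ' and A is not culpable in γ'. -/

import Mathlib

/-! Contracts à la Castagna et al., as in "Contracts in distributed systems".
Atoms are integers; the involution `co` is negation, the success atom `e` is 0
(so that `co e = e`). Contracts use de Bruijn indices for recursion variables. -/

abbrev Atom := ℤ

def co (a : Atom) : Atom := -a

def eAtom : Atom := 0

inductive Contract : Type where
  | intSum : List (Atom × Contract) → Contract
  | extSum : List (Atom × Contract) → Contract
  | rdy    : Atom → Contract → Contract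
  | recur  : Contract → Contract
  | var    : ℕ → Contract

namespace Contract

/-- The failure contract `0` (empty internal and external sums are identified
by structural congruence). -/
def isZero (c : Contract) : Prop := c = intSum [] ∨ c = extSum []

-- Substitution of a (closed) contract `u` for de Bruijn variable `k`.
mutual
def csubst (u : Contract) : ℕ → Contract → Contract
  | k, var n => if n = k then u else var n
  | k, recur c => recur (csubst u (k+1) c)
  | k, rdy a c => rdy a (csubst u k c)
  | k, intSum l => intSum (csubstL u k l)
  | k, extSum l => extSum (csubstL u k l)
def csubstL (u : Contract) : ℕ → List (Atom × Contract) → List (Atom × Contract)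
  | _, [] => []
  | k, (a, c) :: t => (a, csubst u k c) :: csubstL u k t
end

/-- The success contract `E = rec X. e ; X`. -/
def Econ : Contract := recur (intSum [(eAtom, var 0)])

/-- `var n` occurs unguarded (not under any sum / rdy prefix). -/
inductive UnguardedVar : ℕ → Contract → Prop where
  | var : UnguardedVar n (var n)
  | recur : UnguardedVar (n+1) c → UnguardedVar n (recur c)

/-- Well-formed contracts with free variables below `k`: atoms in each sum are
pairwise distinct, recursion is guarded. -/
inductive WF : ℕ → Contract → Prop where
  | intSum : (l.map Prod.fst).Nodup → (∀ p ∈ l, WF k p.2) → WF k (intSum l)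
  | extSum : (l.map Prod.fst).Nodup → (∀ p ∈ l, WF k p.2) → WF k (extSum l)
  | rdy : WF k c → WF k (rdy a c)
  | recur : ¬ UnguardedVar 0 c → WF (k+1) c → WF k (recur c)
  | var : n < k → WF k (var n)

/-- `rdy`-free contracts. -/
inductive RdyFree : Contract → Prop where
  | intSum : (∀ p ∈ l, RdyFree p.2) → RdyFree (intSum l)
  | extSum : (∀ p ∈ l, RdyFree p.2) → RdyFree (extSum l)
  | recur : RdyFree c → RdyFree (recur c)
  | var : RdyFree (var n)

/-- `0`-free contracts: no empty sum occurs. -/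
inductive ZeroFree : Contract → Prop where
  | intSum : l ≠ [] → (∀ p ∈ l, ZeroFree p.2) → ZeroFree (intSum l)
  | extSum : l ≠ [] → (∀ p ∈ l, ZeroFree p.2) → ZeroFree (extSum l)
  | rdy : ZeroFree c → ZeroFree (rdy a c)
  | recur : ZeroFree c → ZeroFree (recur c)
  | var : ZeroFree (var n)

/-- A `rdy` prefix may occur at top level only. -/
def TopRdy (c : Contract) : Prop :=
  RdyFree c ∨ ∃ a c', c = rdy a c' ∧ RdyFree c'

end Contract

open Contract

/-- One step of participant `A` (first component) in a bilateral contract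
`A says c | B says d`: rules [IntExt], [IntInt], [ExtExt], [Rdy] and the
failure rules, plus unfolding of recursion (structural congruence). -/
inductive StepA : Contract → Contract → Atom → Contract → Contract → Prop where
  | intExt : (a, c') ∈ l → (co a, d') ∈ m →
      StepA (.intSum l) (.extSum m) a c' (.rdy (co a) d')
  | intInt : (a, c') ∈ l →
      StepA (.intSum l) (.intSum [(co a, d')]) a c' (.rdy (co a) d')
  | extExt : (a, c') ∈ l → (co a, d') ∈ m →
      StepA (.extSum l) (.extSum m) a c' (.rdy (co a) d')
  | rdy : StepA (.rdy a c) d a c d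
  | intExtFail : (a, c') ∈ l → (∀ q ∈ m, co q.1 ≠ a) →
      StepA (.intSum l) (.extSum m) a Econ (.intSum [])
  | intIntFail : (a, c') ∈ l → ¬ (m ≠ [] ∧ ∀ q ∈ m, co q.1 = a) →
      StepA (.intSum l) (.intSum m) a Econ (.intSum [])
  | extExtFail : (a, c') ∈ l → (∀ p ∈ l, ∀ q ∈ m, p.1 ≠ co q.1) →
      StepA (.extSum l) (.extSum m) a Econ (.intSum [])
  | recL : StepA (csubst (.recur c) 0 c) d a c' d' → StepA (.recur c) d a c' d'
  | recR : StepA c (csubst (.recur d) 0 d) a c' d' → StepA c (.recur d) a c' d'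

/-- The two participants of a bilateral contract. -/
inductive Ptp : Type where
  | A | B
deriving DecidableEq

inductive CLabel : Type where
  | says : Ptp → Atom → CLabel
deriving DecidableEq

/-- Labelled transitions of bilateral contracts. -/
inductive Step : Contract × Contract → CLabel → Contract × Contract → Prop where
  | left  : StepA c d a c' d' → Step (c, d) (.says .A a) (c', d')
  | right : StepA d c a d' c' → Step (c, d) (.says .B a) (c', d')

/-- Participant `p` is culpable in the bilateral contract `γ`. -/
def frown (p : Ptp) (γ : Contract × Contract) : Prop :=
  isZero (match p with | .A => γ.1 | .B => γ.2) ∨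
  ((¬ ∃ γ', Step γ (.says p eAtom) γ') ∧ (∃ a γ', Step γ (.says p a) γ'))

/-- Tokens occurring in ready sets: atoms, or the `rdy` marker. -/
inductive RToken : Type where
  | atom : Atom → RToken
  | rdy  : RToken
deriving DecidableEq

def coT : RToken → RToken
  | .atom a => .atom (co a)
  | .rdy => .rdy

/-- Ready sets. -/
def RS : Contract → Set (Set RToken)
  | .intSum [] => {∅}
  | .intSum (p :: l) => {X | ∃ q ∈ p :: l, X = {RToken.atom q.1}}
  | .extSum [] => {∅}
  | .extSum (p :: l) => {X | X = {t | ∃ q ∈ p :: l, t = RToken.atom q.1}}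
  | .rdy _ _ => {{RToken.rdy}}
  | .recur c => RS c
  | .var _ => {∅}

/-- The defining clauses of compliance. -/
def ContractCompRel (R : Contract → Contract → Prop) : Prop :=
  ∀ c d, R c d →
    (∀ X ∈ RS c, ∀ Y ∈ RS d,
        (∃ t ∈ X, coT t ∈ Y) ∨ RToken.rdy ∈ (X ∪ Y) \ (X ∩ Y)) ∧
    (∀ μ c' d', Step (c, d) μ (c', d') → R c' d')

/-- Compliance: the largest relation satisfying `CompRel`. -/
def Compliant (c d : Contract) : Prop := ∃ R, ContractCompRel R ∧ R c d

/-- A contract succeeds. -/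
def Succeeds (c : Contract) : Prop :=
  (∃ l, c = .intSum l ∧ (eAtom, Econ) ∈ l) ∨
  (∃ l, c = .extSum l ∧ (eAtom, Econ) ∈ l) ∨
  c = .rdy eAtom Econ

/-- Multi-step reduction of bilateral contracts. -/
def Reduces : Contract × Contract → Contract × Contract → Prop :=
  Relation.ReflTransGen (fun γ γ' => ∃ μ, Step γ μ γ')

/-- Bilateral well-formedness: `rdy` at top level only and at most one `rdy`. -/
def BCWF (γ : Contract × Contract) : Prop :=
  TopRdy γ.1 ∧ TopRdy γ.2 ∧ (RdyFree γ.1 ∨ RdyFree γ.2)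

namespace Exculp
open Contract

/-! ### List-level substitution lemmas -/

theorem csubstL_map_fst (u : Contract) (k : ℕ) (l : List (Atom × Contract)) :
    (csubstL u k l).map Prod.fst = l.map Prod.fst := by
  induction l with
  | nil => simp [csubstL]
  | cons p t ih => cases p; simp [csubstL, ih]

theorem csubstL_ne_nil {u : Contract} {k : ℕ} {l : List (Atom × Contract)} (h : l ≠ []) :
    csubstL u k l ≠ [] := by
  cases l with
  | nil => exact absurd rfl h
  | cons p t => cases p; simp [csubstL]

theorem mem_csubstL {u : Contract} {k : ℕ} {l : List (Atom × Contract)} {p : Atom × Contract}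
    (h : p ∈ csubstL u k l) : ∃ c0, (p.1, c0) ∈ l ∧ p.2 = csubst u k c0 := by
  induction l with
  | nil => simp [csubstL] at h
  | cons q t ih =>
    obtain ⟨a, c⟩ := q
    simp only [csubstL, List.mem_cons] at h
    rcases h with h | h
    · subst h; exact ⟨c, by simp, rfl⟩
    · obtain ⟨c0, hm, he⟩ := ih h; exact ⟨c0, List.mem_cons_of_mem _ hm, he⟩

/-! ### Preservation of RdyFree / ZeroFree under substitution -/

theorem rdyFree_csubst {u : Contract} (hu : RdyFree u) :
    ∀ {c}, RdyFree c → ∀ k, RdyFree (csubst u k c) := by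
  intro c h
  induction h with
  | @intSum l hl ih =>
    intro k
    simp only [csubst]
    exact RdyFree.intSum (fun p hp => by
      obtain ⟨c0, hm, he⟩ := mem_csubstL hp; rw [he]; exact ih _ hm k)
  | @extSum l hl ih =>
    intro k
    simp only [csubst]
    exact RdyFree.extSum (fun p hp => by
      obtain ⟨c0, hm, he⟩ := mem_csubstL hp; rw [he]; exact ih _ hm k)
  | @recur c0 h ih => intro k; simp only [csubst]; exact RdyFree.recur (ih (k+1))
  | @var n =>
    intro k
    simp only [csubst]
    split
    · exact hu
    · exact RdyFree.var

theorem zeroFree_csubst {u : Contract} (hu : ZeroFree u) :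
    ∀ {c}, ZeroFree c → ∀ k, ZeroFree (csubst u k c) := by
  intro c h
  induction h with
  | @intSum l hne hl ih =>
    intro k
    simp only [csubst]
    exact ZeroFree.intSum (csubstL_ne_nil hne) (fun p hp => by
      obtain ⟨c0, hm, he⟩ := mem_csubstL hp; rw [he]; exact ih _ hm k)
  | @extSum l hne hl ih =>
    intro k
    simp only [csubst]
    exact ZeroFree.extSum (csubstL_ne_nil hne) (fun p hp => by
      obtain ⟨c0, hm, he⟩ := mem_csubstL hp; rw [he]; exact ih _ hm k)
  | @rdy c0 a h ih => intro k; simp only [csubst]; exact ZeroFree.rdy (ih k)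
  | @recur c0 h ih => intro k; simp only [csubst]; exact ZeroFree.recur (ih (k+1))
  | @var n =>
    intro k
    simp only [csubst]
    split
    · exact hu
    · exact ZeroFree.var

/-! ### Unguarded variables and well-formedness under substitution -/

theorem ug_bound : ∀ {n c}, UnguardedVar n c → ∀ {k}, WF k c → n < k := by
  intro n c h
  induction h with
  | var => intro k hw; cases hw with | var h => exact h
  | recur h ih =>
    intro k hw
    cases hw with | recur _ hw' => have := ih hw'; omega

theorem ug_csubst {u : Contract} (hu : ∀ m, ¬ UnguardedVar m u) :
    ∀ {t n}, UnguardedVar n t → ∀ {c k}, t = csubst u k c → UnguardedVar n c := by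
  intro t n h
  induction h with
  | @var n =>
    intro c k he
    cases c with
    | intSum l => simp [csubst] at he
    | extSum l => simp [csubst] at he
    | rdy a c0 => simp [csubst] at he
    | recur c0 => simp [csubst] at he
    | var m =>
      by_cases hm : m = k
      · simp [csubst, hm] at he
        exact absurd (he ▸ UnguardedVar.var) (hu n)
      · simp [csubst, hm] at he
        subst he; exact UnguardedVar.var
  | @recur n t' h ih =>
    intro c k he
    cases c with
    | intSum l => simp [csubst] at he
    | extSum l => simp [csubst] at he
    | rdy a c0 => simp [csubst] at he
    | recur c0 =>
      simp only [csubst] at he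
      injection he with he'
      exact UnguardedVar.recur (ih he')
    | var m =>
      by_cases hm : m = k
      · simp [csubst, hm] at he
        exact absurd (he ▸ UnguardedVar.recur h) (hu n)
      · simp [csubst, hm] at he
theorem wf_weaken : ∀ {k c}, WF k c → ∀ {k'}, k ≤ k' → WF k' c := by
  intro k c h
  induction h with
  | @intSum l k hnd hm ih => intro k' hk; exact WF.intSum hnd (fun p hp => ih p hp hk)
  | @extSum l k hnd hm ih => intro k' hk; exact WF.extSum hnd (fun p hp => ih p hp hk)
  | @rdy k c0 a h ih => intro k' hk; exact WF.rdy (ih hk)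
  | @recur c0 k hg h ih => intro k' hk; exact WF.recur hg (ih (by omega))
  | @var n k h => intro k' hk; exact WF.var (by omega)

theorem wf_csubst {u : Contract} (hu0 : WF 0 u) (hu : ∀ m, ¬ UnguardedVar m u) :
    ∀ {n c}, WF n c → ∀ {k}, n = k + 1 → WF k (csubst u k c) := by
  intro n c h
  induction h with
  | @intSum l n hnd hm ih =>
    intro k hk
    simp only [csubst]
    refine WF.intSum ?_ ?_
    · rw [csubstL_map_fst]; exact hnd
    · intro p hp
      obtain ⟨c0, hm0, he⟩ := mem_csubstL hp
      rw [he]; exact ih _ hm0 hk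
  | @extSum l n hnd hm ih =>
    intro k hk
    simp only [csubst]
    refine WF.extSum ?_ ?_
    · rw [csubstL_map_fst]; exact hnd
    · intro p hp
      obtain ⟨c0, hm0, he⟩ := mem_csubstL hp
      rw [he]; exact ih _ hm0 hk
  | @rdy n c0 a h ih => intro k hk; simp only [csubst]; exact WF.rdy (ih hk)
  | @recur c0 n hg h ih =>
    intro k hk
    simp only [csubst]
    refine WF.recur ?_ (ih (by omega))
    intro hcontra
    exact hg (ug_csubst hu hcontra rfl)
  | @var m n hlt =>
    intro k hk
    simp only [csubst]
    by_cases hm : m = k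
    · simp only [hm, if_pos rfl]
      exact wf_weaken hu0 (Nat.zero_le _)
    · simp only [if_neg hm]
      exact WF.var (by omega)

/-! ### Leading `recur` towers -/

def iterRec : ℕ → Contract → Contract
  | 0, s => s
  | j+1, s => .recur (iterRec j s)

def nrec : Contract → ℕ
  | .recur c => nrec c + 1
  | _ => 0

theorem csubst_iterRec (u : Contract) : ∀ j k s,
    csubst u k (iterRec j s) = iterRec j (csubst u (k + j) s) := by
  intro j
  induction j with
  | zero => intro k s; simp [iterRec]
  | succ j ih =>
    intro k s
    simp only [iterRec, csubst]
    rw [ih (k+1) s]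
    have : k + 1 + j = k + (j + 1) := by omega
    rw [this]

theorem nrec_iterRec : ∀ j s, nrec (iterRec j s) = j + nrec s := by
  intro j
  induction j with
  | zero => intro s; simp [iterRec]
  | succ j ih => intro s; simp [iterRec, nrec, ih]; omega

theorem rdyFree_iterRec : ∀ {j s}, RdyFree (iterRec j s) → RdyFree s := by
  intro j
  induction j with
  | zero => intro s h; exact h
  | succ j ih =>
    intro s h
    simp only [iterRec] at h
    cases h with | recur h => exact ih h

theorem head_shape : ∀ {k c}, WF k c → (∀ n, ¬ UnguardedVar n c) →
    ∃ j s, c = iterRec j s ∧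
      ((∃ l, s = Contract.intSum l) ∨ (∃ l, s = Contract.extSum l) ∨
       (∃ b s', s = Contract.rdy b s')) := by
  intro k c h
  induction h with
  | @intSum l k hnd hm ih => exact fun _ => ⟨0, _, rfl, Or.inl ⟨_, rfl⟩⟩
  | @extSum l k hnd hm ih => exact fun _ => ⟨0, _, rfl, Or.inr (Or.inl ⟨_, rfl⟩)⟩
  | @rdy k c0 a h ih => exact fun _ => ⟨0, _, rfl, Or.inr (Or.inr ⟨_, _, rfl⟩)⟩
  | @recur c0 k hg h ih =>
    intro hng
    have hng0 : ∀ n, ¬ UnguardedVar n c0 := by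
      intro n hn
      cases n with
      | zero => exact hg hn
      | succ m => exact hng m (UnguardedVar.recur hn)
    obtain ⟨j, s, rfl, hs⟩ := ih hng0
    exact ⟨j+1, s, rfl, hs⟩
  | @var n k h => exact fun hng => absurd UnguardedVar.var (hng n)

theorem unfold_props {c0 : Contract} (hw : WF 0 (.recur c0)) (hr : RdyFree (.recur c0)) :
    WF 0 (csubst (.recur c0) 0 c0) ∧ RdyFree (csubst (.recur c0) 0 c0) ∧
    nrec (csubst (.recur c0) 0 c0) < nrec (.recur c0) ∧
    (ZeroFree (.recur c0) → ZeroFree (csubst (.recur c0) 0 c0)) := by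
  have hnu : ∀ m, ¬ UnguardedVar m (Contract.recur c0) := by
    intro m hm
    have := ug_bound hm hw
    omega
  obtain ⟨hg, hw1⟩ : ¬ UnguardedVar 0 c0 ∧ WF 1 c0 := by
    cases hw with | recur hg hw1 => exact ⟨hg, hw1⟩
  have hr0 : RdyFree c0 := by cases hr with | recur h => exact h
  have hng0 : ∀ n, ¬ UnguardedVar n c0 := by
    intro n hn
    cases n with
    | zero => exact hg hn
    | succ m => exact hnu m (UnguardedVar.recur hn)
  refine ⟨wf_csubst hw hnu hw1 rfl, rdyFree_csubst hr hr0 0, ?_, ?_⟩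
  · obtain ⟨j, s, hc0, hs⟩ := head_shape hw1 hng0
    have hnrs : nrec s = 0 := by
      rcases hs with ⟨l, rfl⟩ | ⟨l, rfl⟩ | ⟨b, s', rfl⟩ <;> simp [nrec]
    rcases hs with ⟨l, rfl⟩ | ⟨l, rfl⟩ | ⟨b, s', rfl⟩
    · subst hc0
      rw [csubst_iterRec]
      simp only [csubst]
      rw [nrec_iterRec]
      simp [nrec, nrec_iterRec]
    · subst hc0
      rw [csubst_iterRec]
      simp only [csubst]
      rw [nrec_iterRec]
      simp [nrec, nrec_iterRec]
    · exact absurd (rdyFree_iterRec (hc0 ▸ hr0)) (by intro h; cases h)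
  · intro hz
    have hz0 : ZeroFree c0 := by cases hz with | recur h => exact h
    exact zeroFree_csubst hz hz0 0
/-! ### Unfolding relation and no-step lemmas -/

inductive Unf : ℕ → Contract → Contract → Prop where
  | refl : Unf 0 c c
  | step : Unf n (csubst (.recur c) 0 c) t → Unf (n+1) (.recur c) t

/-- No transition is possible from an external sum facing an internal sum
(modulo unfolding of recursion). -/
theorem ns : ∀ {c d a c' d'}, StepA c d a c' d' →
    ∀ {j i l m}, Unf j c (.extSum l) → Unf i d (.intSum m) → False := by
  intro c d a c' d' h
  induction h with
  | intExt h1 h2 => intro j i l m hu1 hu2; cases hu1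
  | intInt h1 => intro j i l m hu1 hu2; cases hu1
  | extExt h1 h2 => intro j i l m hu1 hu2; cases hu2
  | rdy => intro j i l m hu1 hu2; cases hu1
  | intExtFail h1 h2 => intro j i l m hu1 hu2; cases hu1
  | intIntFail h1 h2 => intro j i l m hu1 hu2; cases hu1
  | extExtFail h1 h2 => intro j i l m hu1 hu2; cases hu2
  | recL h ih =>
    intro j i l m hu1 hu2
    cases hu1 with | step hu1' => exact ih hu1' hu2
  | recR h ih =>
    intro j i l m hu1 hu2
    cases hu2 with | step hu2' => exact ih hu1 hu2'

/-- No transition is possible for a `rdy`-free contract facing a `rdy`. -/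
theorem stepA_rdy_false : ∀ {c d a c' d'}, StepA c d a c' d' →
    ∀ b y, d = .rdy b y → RdyFree c → False := by
  intro c d a c' d' h
  induction h with
  | intExt h1 h2 => intro b y hd _; exact Contract.noConfusion hd
  | intInt h1 => intro b y hd _; exact Contract.noConfusion hd
  | extExt h1 h2 => intro b y hd _; exact Contract.noConfusion hd
  | rdy => intro b y hd hr; cases hr
  | intExtFail h1 h2 => intro b y hd _; exact Contract.noConfusion hd
  | intIntFail h1 h2 => intro b y hd _; exact Contract.noConfusion hd
  | extExtFail h1 h2 => intro b y hd _; exact Contract.noConfusion hd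
  | recL h ih =>
    intro b y hd hr
    cases hr with | recur hr0 =>
      exact ih b y hd (rdyFree_csubst (RdyFree.recur hr0) hr0 0)
  | recR h ih => intro b y hd _; exact Contract.noConfusion hd

/-- Every transition of `E` (or of its unfolding) is labelled `e`. -/
theorem econ_label : ∀ {x d a c' d'}, StepA x d a c' d' →
    x = Econ ∨ x = .intSum [(eAtom, Econ)] → a = eAtom := by
  intro x d a c' d' h
  induction h with
  | intExt h1 h2 =>
    rintro (hx | hx)
    · exact absurd hx (by simp [Econ])
    · injection hx with hx'; subst hx'; exact (by simpa using h1 : _ ∧ _).1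
  | intInt h1 =>
    rintro (hx | hx)
    · exact absurd hx (by simp [Econ])
    · injection hx with hx'; subst hx'; exact (by simpa using h1 : _ ∧ _).1
  | extExt h1 h2 => rintro (hx | hx) <;> exact absurd hx (by simp [Econ])
  | rdy => rintro (hx | hx) <;> exact absurd hx (by simp [Econ])
  | intExtFail h1 h2 =>
    rintro (hx | hx)
    · exact absurd hx (by simp [Econ])
    · injection hx with hx'; subst hx'; exact (by simpa using h1 : _ ∧ _).1
  | intIntFail h1 h2 =>
    rintro (hx | hx)
    · exact absurd hx (by simp [Econ])
    · injection hx with hx'; subst hx'; exact (by simpa using h1 : _ ∧ _).1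
  | extExtFail h1 h2 => rintro (hx | hx) <;> exact absurd hx (by simp [Econ])
  | recL h ih =>
    rintro (hx | hx)
    · apply ih
      right
      rename_i c0 d0 a0 c0' d0'
      have hx' : c0 = Contract.intSum [(eAtom, Contract.var 0)] := by
        simp only [Econ] at hx; injection hx
      subst hx'
      simp [csubst, csubstL, Econ]
    · exact absurd hx (by simp)
  | recR h ih => exact ih
/-! ### Good target states and non-culpability -/

def GoodT (x y : Contract) : Prop :=
  (¬ isZero x ∧ RdyFree x ∧ ∃ b y', y = Contract.rdy b y') ∨
  (x = Econ ∧ y = Contract.intSum [])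

theorem zeroFree_not_isZero {x : Contract} (h : ZeroFree x) : ¬ isZero x := by
  rintro (hz | hz) <;> cases h <;> first
    | exact Contract.noConfusion hz
    | (injection hz with hz'; subst hz'; simp_all)

theorem goodT_not_frown {x y : Contract} (h : GoodT x y) : ¬ frown .A (x, y) := by
  rcases h with ⟨hnz, hrf, b, y', rfl⟩ | ⟨rfl, rfl⟩
  · rintro (hz | ⟨hne, a, g9, hs⟩)
    · exact hnz hz
    · cases hs with
      | left hsa => exact stepA_rdy_false hsa b y' rfl hrf
  · rintro (hz | ⟨hne, a, g9, hs⟩)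
    · rcases hz with hz | hz <;> exact absurd hz (by simp [Econ])
    · cases hs with
      | left hsa =>
        have ha : a = eAtom := econ_label hsa (Or.inl rfl)
        subst ha
        exact hne ⟨_, Step.left hsa⟩

theorem not_frown_of_noStep {x y : Contract} (hz : ¬ isZero x)
    (hns : ∀ a c' d', ¬ StepA x y a c' d') : ¬ frown .A (x, y) := by
  rintro (h | ⟨hne, a, g9, hs⟩)
  · exact hz h
  · cases hs with
    | left h => exact hns _ _ _ h

/-! ### The key step lemma -/

theorem key : ∀ c d : Contract, WF 0 c → WF 0 d → RdyFree c → RdyFree d → ZeroFree c →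
    (∃ a c' d', StepA c d a c' d' ∧ GoodT c' d') ∨
    (∃ j i l m, Unf j c (.extSum l) ∧ Unf i d (.intSum m)) := by
  intro c d hc hd hrc hrd hz
  cases c with
  | var n => cases hc with | var h => omega
  | rdy a c0 => cases hrc
  | recur c0 =>
    obtain ⟨hw', hr', hlt, hz'⟩ := unfold_props hc hrc
    rcases key (csubst (.recur c0) 0 c0) d hw' hd hr' hrd (hz' hz) with
      ⟨a, c', d', hs, hg⟩ | ⟨j, i, l, m, h1, h2⟩
    · exact Or.inl ⟨a, c', d', StepA.recL hs, hg⟩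
    · exact Or.inr ⟨j+1, i, l, m, Unf.step h1, h2⟩
  | intSum l =>
    obtain ⟨hne, hall⟩ : l ≠ [] ∧ ∀ p ∈ l, ZeroFree p.2 := by
      cases hz with | intSum h1 h2 => exact ⟨h1, h2⟩
    have hallr : ∀ p ∈ l, RdyFree p.2 := by cases hrc with | intSum h => exact h
    obtain ⟨p, t, rfl⟩ : ∃ p t, l = p :: t := by
      cases l with
      | nil => exact absurd rfl hne
      | cons p t => exact ⟨p, t, rfl⟩
    have hmem : (p.1, p.2) ∈ p :: t := by simp
    have hgood1 : ∀ b y', GoodT p.2 (.rdy b y') :=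
      fun b y' => Or.inl ⟨zeroFree_not_isZero (hall p (by simp)), hallr p (by simp), b, y', rfl⟩
    cases d with
    | var n => cases hd with | var h => omega
    | rdy b d0 => cases hrd
    | recur d0 =>
      obtain ⟨hw', hr', hlt, _⟩ := unfold_props hd hrd
      rcases key (.intSum (p :: t)) (csubst (.recur d0) 0 d0) hc hw' hrc hr' hz with
        ⟨a, c', d', hs, hg⟩ | ⟨j, i, l', m, h1, h2⟩
      · exact Or.inl ⟨a, c', d', StepA.recR hs, hg⟩
      · cases h1
    | intSum m =>
      have hnd : (m.map Prod.fst).Nodup := by cases hd with | intSum h _ => exact h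
      by_cases hm : m = []
      · subst hm
        exact Or.inl ⟨p.1, Econ, _, StepA.intIntFail hmem (by simp), Or.inr ⟨rfl, rfl⟩⟩
      · by_cases hco : ∀ q ∈ m, co q.1 = p.1
        · obtain ⟨q, r, rfl⟩ : ∃ q r, m = q :: r := by
            cases m with
            | nil => exact absurd rfl hm
            | cons q r => exact ⟨q, r, rfl⟩
          have hq1 : q.1 = co p.1 := by
            have := hco q (by simp); simp [co] at this ⊢; linarith
          have hr0 : r = [] := by
            cases r with
            | nil => rfl
            | cons q2 r2 =>
              have hq2 : q2.1 = co p.1 := by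
                have := hco q2 (by simp); simp [co] at this ⊢; linarith
              simp [hq1, hq2] at hnd
          subst hr0
          have hm' : (q.1, q.2) = (co p.1, q.2) := by rw [hq1]
          refine Or.inl ⟨p.1, p.2, _, ?_, hgood1 (co p.1) q.2⟩
          have : (q : Atom × Contract) = (co p.1, q.2) := by rw [← hq1]
          rw [show (q :: ([] : List (Atom × Contract))) = [(co p.1, q.2)] by rw [this]]
          exact StepA.intInt hmem
        · push_neg at hco
          obtain ⟨q, hqm, hqne⟩ := hco
          refine Or.inl ⟨p.1, Econ, _, StepA.intIntFail hmem ?_, Or.inr ⟨rfl, rfl⟩⟩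
          rintro ⟨-, hforall⟩
          exact hqne (hforall q hqm)
    | extSum m =>
      by_cases hex : ∃ q ∈ m, q.1 = co p.1
      · obtain ⟨q, hqm, hq1⟩ := hex
        have : ((co p.1, q.2) : Atom × Contract) ∈ m := by rw [← hq1]; exact hqm
        exact Or.inl ⟨p.1, p.2, _, StepA.intExt hmem this, hgood1 (co p.1) q.2⟩
      · push_neg at hex
        refine Or.inl ⟨p.1, Econ, _, StepA.intExtFail hmem ?_, Or.inr ⟨rfl, rfl⟩⟩
        intro q hqm hqe
        apply hex q hqm
        simp [co] at hqe ⊢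
        linarith
  | extSum l =>
    obtain ⟨hne, hall⟩ : l ≠ [] ∧ ∀ p ∈ l, ZeroFree p.2 := by
      cases hz with | extSum h1 h2 => exact ⟨h1, h2⟩
    have hallr : ∀ p ∈ l, RdyFree p.2 := by cases hrc with | extSum h => exact h
    obtain ⟨p, t, rfl⟩ : ∃ p t, l = p :: t := by
      cases l with
      | nil => exact absurd rfl hne
      | cons p t => exact ⟨p, t, rfl⟩
    have hmem : (p.1, p.2) ∈ p :: t := by simp
    cases d with
    | var n => cases hd with | var h => omega
    | rdy b d0 => cases hrd
    | recur d0 =>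
      obtain ⟨hw', hr', hlt, _⟩ := unfold_props hd hrd
      rcases key (.extSum (p :: t)) (csubst (.recur d0) 0 d0) hc hw' hrc hr' hz with
        ⟨a, c', d', hs, hg⟩ | ⟨j, i, l', m, h1, h2⟩
      · exact Or.inl ⟨a, c', d', StepA.recR hs, hg⟩
      · exact Or.inr ⟨j, i+1, l', m, h1, Unf.step h2⟩
    | intSum m => exact Or.inr ⟨0, 0, p :: t, m, Unf.refl, Unf.refl⟩
    | extSum m =>
      by_cases hex : ∃ p' ∈ p :: t, ∃ q ∈ m, p'.1 = co q.1
      · obtain ⟨p', hp', q, hqm, he⟩ := hex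
        have hm2 : ((co p'.1, q.2) : Atom × Contract) ∈ m := by
          have : co p'.1 = q.1 := by simp [co] at he ⊢; linarith
          rw [this]; exact hqm
        have hp'mem : (p'.1, p'.2) ∈ p :: t := by simpa using hp'
        refine Or.inl ⟨p'.1, p'.2, _, StepA.extExt hp'mem hm2,
          Or.inl ⟨zeroFree_not_isZero (hall p' hp'), hallr p' hp', _, _, rfl⟩⟩
      · push_neg at hex
        exact Or.inl ⟨p.1, Econ, _, StepA.extExtFail hmem hex, Or.inr ⟨rfl, rfl⟩⟩
termination_by c d _ _ _ _ _ => nrec c + nrec d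
decreasing_by
  all_goals (subst_vars; simp only [nrec] at hlt ⊢; linarith)
end Exculp

open Contract Exculp in
/-- contractual exculpation. For every bilateral contract with a
`0`-free contract of `A`, there is an `A`-solo trace of length at most 2 after
which `A` is not culpable. -/
theorem stmt9 (c d : Contract) (hc : Contract.WF 0 c) (hd : Contract.WF 0 d)
    (hb : BCWF (c, d)) (h0 : Contract.ZeroFree c) :
    ∃ γ' : Contract × Contract,
      (γ' = (c, d) ∨
       (∃ a, Step (c, d) (.says .A a) γ') ∨
       (∃ a b γ₁, Step (c, d) (.says .A a) γ₁ ∧ Step γ₁ (.says .A b) γ')) ∧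
      ¬ frown .A γ' := by
  obtain ⟨htc, htd, hor⟩ := hb
  simp only [TopRdy] at htc htd
  rcases htc with hrc | ⟨a0, c1, rfl, hrc1⟩
  · rcases htd with hrd | ⟨b0, d2, rfl, hrd2⟩
    · rcases key c d hc hd hrc hrd h0 with ⟨a, c', d', hs, hg⟩ | ⟨j, i, l, m, h1, h2⟩
      · exact ⟨(c', d'), Or.inr (Or.inl ⟨a, Step.left hs⟩), goodT_not_frown hg⟩
      · exact ⟨(c, d), Or.inl rfl,
          not_frown_of_noStep (zeroFree_not_isZero h0) (fun a c' d' hs => ns hs h1 h2)⟩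
    · exact ⟨(c, .rdy b0 d2), Or.inl rfl,
        not_frown_of_noStep (zeroFree_not_isZero h0)
          (fun a c' d' hs => stepA_rdy_false hs b0 d2 rfl hrc)⟩
  · have hrd : RdyFree d := by
      rcases hor with h | h
      · cases h
      · exact h
    have hc1 : WF 0 c1 := by cases hc with | rdy h => exact h
    have hz1 : ZeroFree c1 := by cases h0 with | rdy h => exact h
    have hstep1 : StepA (.rdy a0 c1) d a0 c1 d := StepA.rdy
    rcases key c1 d hc1 hd hrc1 hrd hz1 with ⟨a, c', d', hs, hg⟩ | ⟨j, i, l, m, h1, h2⟩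
    · exact ⟨(c', d'), Or.inr (Or.inr ⟨a0, a, (c1, d), Step.left hstep1, Step.left hs⟩),
        goodT_not_frown hg⟩
    · exact ⟨(c1, d), Or.inr (Or.inl ⟨a0, Step.left hstep1⟩),
        not_frown_of_noStep (zeroFree_not_isZero hz1) (fun a c' d' hs => ns hs h1 h2)⟩
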